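/- arXiv:1505.06467 — 2 statements merged into one kernel-verified Lean document; each statement's English description precedes it below -/
import Mathlib

section
/- Let x be a formal variable and define β'_n(x) = (xq;q)_n (x^{-1};q)_n / (q;q)_{2n}. Then the second derivative in x evaluated at x = 1 satisfies d²/dx² β'_n(x)|_{x=1} = -2 (q;q)_{n-1}² / (q;q)_{2n} for all n ≥ 1. -/
open Polynomial Finset Filter

private noncomputable def aP (q : ℝ) (m : ℕ) : Polynomial ℝ :=
  ∏ j ∈ Finset.range m, (1 - Polynomial.C (q ^ (j + 1)) * Polynomial.X)

private noncomputable def cP (q : ℝ) (m : ℕ) : Polynomial ℝ :=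
  ∏ j ∈ Finset.range m, (Polynomial.X - Polynomial.C (q ^ (j + 1)))

private lemma aP_eval (q : ℝ) (m : ℕ) :
    (aP q m).eval 1 = ∏ j ∈ Finset.range m, (1 - q ^ (j + 1)) := by
  simp [aP, eval_prod]

private lemma cP_eval (q : ℝ) (m : ℕ) :
    (cP q m).eval 1 = ∏ j ∈ Finset.range m, (1 - q ^ (j + 1)) := by
  simp [cP, eval_prod]

private lemma aP_d_succ (q : ℝ) (m : ℕ) :
    (derivative (aP q (m + 1))).eval 1 =
      (derivative (aP q m)).eval 1 * (1 - q ^ (m + 1)) +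
        (∏ j ∈ Finset.range m, (1 - q ^ (j + 1))) * (-q ^ (m + 1)) := by
  rw [aP, Finset.prod_range_succ, ← aP, derivative_mul]
  simp only [derivative_sub, derivative_one, derivative_mul, derivative_C, derivative_X,
    zero_sub, zero_mul, mul_one, zero_add, eval_add, eval_mul, eval_neg, eval_sub, eval_one,
    eval_X, eval_C, aP_eval]

private lemma cP_d_succ (q : ℝ) (m : ℕ) :
    (derivative (cP q (m + 1))).eval 1 =
      (derivative (cP q m)).eval 1 * (1 - q ^ (m + 1)) +
        (∏ j ∈ Finset.range m, (1 - q ^ (j + 1))) := by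
  rw [cP, Finset.prod_range_succ, ← cP, derivative_mul]
  simp only [derivative_sub, derivative_C, derivative_X, sub_zero, eval_add, eval_mul,
    eval_sub, eval_one, eval_X, eval_C, cP_eval, mul_one]

private lemma beta_key (q : ℝ) (m : ℕ) :
    (derivative (aP q (m + 1))).eval 1 * (∏ j ∈ Finset.range m, (1 - q ^ (j + 1)))
      + (∏ j ∈ Finset.range (m + 1), (1 - q ^ (j + 1))) * (derivative (cP q m)).eval 1
      - (m + 1 : ℝ) * (∏ j ∈ Finset.range (m + 1), (1 - q ^ (j + 1)))
          * (∏ j ∈ Finset.range m, (1 - q ^ (j + 1)))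
      + (∏ j ∈ Finset.range m, (1 - q ^ (j + 1))) ^ 2 = 0 := by
  induction m with
  | zero =>
      rw [aP_d_succ]
      simp [aP, cP]
      ring
  | succ m ih =>
      rw [aP_d_succ q (m + 1), cP_d_succ q m]
      simp only [Finset.prod_range_succ] at ih ⊢
      push_cast
      linear_combination ((1 - q ^ (m + 2)) * (1 - q ^ (m + 1))) * ih

/-- With `β'_n(x) = (xq;q)_n (x⁻¹;q)_n / (q;q)_{2n}` (viewed as a function of a real
variable `x`, with `q` a real parameter for which `(q;q)_{2n} ≠ 0`), we have
`d²/dx² β'_n(x)|_{x=1} = -2 (q;q)_{n-1}² / (q;q)_{2n}` for all `n ≥ 1`. -/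
theorem second_deriv_beta_at_one (q : ℝ) (n : ℕ) (hn : 1 ≤ n)
    (hq : ∏ j ∈ Finset.range (2 * n), (1 - q ^ (j + 1)) ≠ 0) :
    deriv (deriv fun x : ℝ =>
        (∏ j ∈ Finset.range n, (1 - x * q ^ (j + 1))) *
          (∏ j ∈ Finset.range n, (1 - x⁻¹ * q ^ j)) /
          ∏ j ∈ Finset.range (2 * n), (1 - q ^ (j + 1))) 1 =
      -2 * (∏ j ∈ Finset.range (n - 1), (1 - q ^ (j + 1))) ^ 2 /
        ∏ j ∈ Finset.range (2 * n), (1 - q ^ (j + 1)) := by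
  obtain ⟨k, rfl⟩ : ∃ k, n = k + 1 := ⟨n - 1, (Nat.succ_pred_eq_of_pos hn).symm⟩
  simp only [Nat.add_sub_cancel]
  set D : ℝ := ∏ j ∈ Finset.range (2 * (k + 1)), (1 - q ^ (j + 1)) with hD
  set p : Polynomial ℝ := aP q (k + 1) * (cP q k * (Polynomial.X - 1)) with hp
  -- Step A: eventual equality with the polynomial form
  have hfg : (fun x : ℝ =>
        (∏ j ∈ Finset.range (k + 1), (1 - x * q ^ (j + 1))) *
          (∏ j ∈ Finset.range (k + 1), (1 - x⁻¹ * q ^ j)) / D) =ᶠ[nhds (1 : ℝ)]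
      (fun x : ℝ => eval x p * (x⁻¹) ^ (k + 1) / D) := by
    filter_upwards [eventually_ne_nhds (one_ne_zero (α := ℝ))] with x hx
    have hB : (∏ j ∈ Finset.range (k + 1), (1 - x⁻¹ * q ^ j)) =
        (eval x (cP q k) * (x - 1)) * (x⁻¹) ^ (k + 1) := by
      calc (∏ j ∈ Finset.range (k + 1), (1 - x⁻¹ * q ^ j))
          = ∏ j ∈ Finset.range (k + 1), ((x - q ^ j) * x⁻¹) :=
            Finset.prod_congr rfl (fun j _ => by field_simp)
        _ = (∏ j ∈ Finset.range (k + 1), (x - q ^ j)) * (x⁻¹) ^ (k + 1) := by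
            rw [Finset.prod_mul_distrib, Finset.prod_const, Finset.card_range]
        _ = ((∏ j ∈ Finset.range k, (x - q ^ (j + 1))) * (x - 1)) * (x⁻¹) ^ (k + 1) := by
            rw [Finset.prod_range_succ']; norm_num
        _ = (eval x (cP q k) * (x - 1)) * (x⁻¹) ^ (k + 1) := by
            simp [cP, eval_prod]
    have hA : (∏ j ∈ Finset.range (k + 1), (1 - x * q ^ (j + 1))) = eval x (aP q (k + 1)) := by
      simp [aP, eval_prod, mul_comm]
    rw [hB, hA, hp, eval_mul, eval_mul, eval_sub, eval_X, eval_one]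
    ring
  -- Step B: first derivative on a punctured neighborhood
  have hg' : ∀ x : ℝ, x ≠ 0 → HasDerivAt (fun x : ℝ => eval x p * (x⁻¹) ^ (k + 1) / D)
      ((eval x (derivative p) * (x⁻¹) ^ (k + 1) +
        eval x p * (((k + 1 : ℕ) : ℝ) * (x⁻¹) ^ k * (-(x ^ 2)⁻¹))) / D) x := by
    intro x hx
    exact ((p.hasDerivAt x).mul ((hasDerivAt_inv hx).pow (k + 1))).div_const D
  set G : ℝ → ℝ := fun x => (eval x (derivative p) * (x⁻¹) ^ (k + 1) +
      eval x p * (((k + 1 : ℕ) : ℝ) * (x⁻¹) ^ k * (-(x ^ 2)⁻¹))) / D with hG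
  have h2 : deriv (fun x : ℝ => eval x p * (x⁻¹) ^ (k + 1) / D) =ᶠ[nhds (1 : ℝ)] G := by
    filter_upwards [eventually_ne_nhds (one_ne_zero (α := ℝ))] with x hx
    exact (hg' x hx).deriv
  have hred : deriv (deriv fun x : ℝ =>
        (∏ j ∈ Finset.range (k + 1), (1 - x * q ^ (j + 1))) *
          (∏ j ∈ Finset.range (k + 1), (1 - x⁻¹ * q ^ j)) / D) 1 = deriv G 1 :=
    (hfg.deriv.trans h2).deriv_eq
  -- Step C: second derivative at 1
  have h_inv : HasDerivAt (fun x : ℝ => x⁻¹) (-((1 : ℝ) ^ 2)⁻¹) 1 := hasDerivAt_inv one_ne_zero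
  have hw : HasDerivAt (fun x : ℝ => -((x ^ 2)⁻¹))
      (-(-(((2 : ℕ) : ℝ) * 1 ^ (2 - 1)) / ((1 : ℝ) ^ 2) ^ 2)) 1 :=
    ((hasDerivAt_pow 2 (1 : ℝ)).inv (by norm_num)).neg
  have hT1 := ((derivative p).hasDerivAt (1 : ℝ)).mul (h_inv.pow (k + 1))
  have hT2 := (p.hasDerivAt (1 : ℝ)).mul (((h_inv.pow k).const_mul (((k + 1 : ℕ) : ℝ))).mul hw)
  have hGd := (hT1.add hT2).div_const D
  rw [hred, show deriv G 1 = _ from hGd.deriv]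
  -- Step D: pure algebra
  have hp0 : eval 1 p = 0 := by simp [hp]
  have hp1 : eval 1 (derivative p) =
      (aP q (k + 1)).eval 1 * (cP q k).eval 1 := by
    simp [hp, derivative_mul, eval_mul, eval_add]
  have hp2 : eval 1 (derivative (derivative p)) =
      2 * ((derivative (aP q (k + 1))).eval 1 * (cP q k).eval 1 +
        (aP q (k + 1)).eval 1 * (derivative (cP q k)).eval 1) := by
    simp [hp, derivative_mul, eval_mul, eval_add]
    ring
  rw [hp0, hp1, hp2, aP_eval, cP_eval]
  have hkey := beta_key q k
  congr 1
  push_cast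
  push_cast at hkey
  norm_num
  linear_combination 2 * hkey
end

section
/- Let x be a formal variable and define β'_n(x) = (xq;q)_n (x^{-1};q)_n / (q;q)_{2n}. Then d²/dx² β'_n(x)|_{x=q^{-1}} = -2 q^{n+2} (q;q)_{n-1}² / (q;q)_{2n} for all n ≥ 1. -/
/-- With `β'_n(x) = (xq;q)_n (x⁻¹;q)_n / (q;q)_{2n}` (viewed as a function of a real
variable `x`, with `q ≠ 0` a real parameter for which `(q;q)_{2n} ≠ 0`), we have
`d²/dx² β'_n(x)|_{x=q⁻¹} = -2 q^{n+2} (q;q)_{n-1}² / (q;q)_{2n}` for all `n ≥ 1`. -/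
theorem second_deriv_beta_at_qinv (q : ℝ) (hq0 : q ≠ 0) (n : ℕ) (hn : 1 ≤ n)
    (hq : ∏ j ∈ Finset.range (2 * n), (1 - q ^ (j + 1)) ≠ 0) :
    deriv (deriv fun x : ℝ =>
        (∏ j ∈ Finset.range n, (1 - x * q ^ (j + 1))) *
          (∏ j ∈ Finset.range n, (1 - x⁻¹ * q ^ j)) /
          ∏ j ∈ Finset.range (2 * n), (1 - q ^ (j + 1))) q⁻¹ =
      -2 * q ^ (n + 2) * (∏ j ∈ Finset.range (n - 1), (1 - q ^ (j + 1))) ^ 2 /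
        ∏ j ∈ Finset.range (2 * n), (1 - q ^ (j + 1)) := by
  obtain ⟨m, rfl⟩ : ∃ m, n = m + 1 := ⟨n - 1, (Nat.succ_pred_eq_of_pos hn).symm⟩
  set C : ℝ := ∏ j ∈ Finset.range (2 * (m + 1)), (1 - q ^ (j + 1)) with hC
  set c : ℝ := q⁻¹ with hc
  have hc0 : c ≠ 0 := inv_ne_zero hq0
  -- the paired function
  set r : ℕ → ℝ → ℝ := fun j x => (1 - x * q ^ (j + 2)) * (1 - x⁻¹ * q ^ j) with hr
  set g : ℝ → ℝ := fun x =>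
    (∏ j ∈ Finset.range m, r j x) * (1 - x⁻¹ * q ^ m) / C with hg
  have key : (fun x : ℝ =>
        (∏ j ∈ Finset.range (m + 1), (1 - x * q ^ (j + 1))) *
          (∏ j ∈ Finset.range (m + 1), (1 - x⁻¹ * q ^ j)) / C)
      = fun x => (1 - x * q) * g x := by
    funext x
    have h1 : (∏ j ∈ Finset.range (m + 1), (1 - x * q ^ (j + 1)))
        = (∏ j ∈ Finset.range m, (1 - x * q ^ (j + 2))) * (1 - x * q ^ (0 + 1)) :=
      Finset.prod_range_succ' (fun j => 1 - x * q ^ (j + 1)) m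
    have h2 : (∏ j ∈ Finset.range (m + 1), (1 - x⁻¹ * q ^ j))
        = (∏ j ∈ Finset.range m, (1 - x⁻¹ * q ^ j)) * (1 - x⁻¹ * q ^ m) :=
      Finset.prod_range_succ _ m
    rw [h1, h2, hg, hr]
    simp only [pow_one, zero_add]
    rw [Finset.prod_mul_distrib]
    ring
  rw [key]
  -- derivative facts
  have hrzero : ∀ j ∈ Finset.range m, HasDerivAt (r j) 0 c := by
    intro j _
    have hu : HasDerivAt (fun x : ℝ => 1 - x * q ^ (j + 2)) (-(q ^ (j + 2))) c := by
      simpa using ((hasDerivAt_id c).mul_const (q ^ (j + 2))).const_sub 1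
    have hv : HasDerivAt (fun x : ℝ => 1 - x⁻¹ * q ^ j) ((c ^ 2)⁻¹ * q ^ j) c := by
      simpa using ((hasDerivAt_inv hc0).mul_const (q ^ j)).const_sub 1
    have := hu.mul hv
    refine this.congr_deriv ?_
    symm
    rw [hc]
    field_simp
    ring
  have hprod : HasDerivAt (fun x => ∏ j ∈ Finset.range m, r j x) 0 c := by
    have := HasDerivAt.fun_finsetProd (f' := fun _ : ℕ => (0 : ℝ)) hrzero
    simpa using this
  have hs' : HasDerivAt (fun x : ℝ => 1 - x⁻¹ * q ^ m) ((c ^ 2)⁻¹ * q ^ m) c := by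
    simpa using ((hasDerivAt_inv hc0).mul_const (q ^ m)).const_sub 1
  set D : ℝ := (∏ j ∈ Finset.range m, (1 - q ^ (j + 1))) ^ 2 * q ^ (m + 2) / C with hD
  have hgD : HasDerivAt g D c := by
    have := (hprod.mul hs').div_const C
    refine this.congr_deriv ?_
    symm
    rw [hD, hc]
    have : ∀ j ∈ Finset.range m, r j q⁻¹ = (1 - q ^ (j + 1)) ^ 2 := by
      intro j _
      rw [hr]
      simp only [inv_inv]
      rw [pow_add, pow_add]
      field_simp
    rw [Finset.prod_congr rfl this, ← Finset.prod_pow]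
    simp only [zero_mul, zero_add, inv_pow, inv_inv]
    ring
  -- smoothness of g on {0}ᶜ
  have hS : IsOpen ({0}ᶜ : Set ℝ) := isOpen_compl_singleton
  have hcS : c ∈ ({0}ᶜ : Set ℝ) := hc0
  have hinv : ContDiffOn ℝ 2 (fun x : ℝ => x⁻¹) ({0}ᶜ : Set ℝ) := contDiffOn_inv ℝ
  have hgsm : ContDiffOn ℝ 2 g ({0}ᶜ : Set ℝ) := by
    apply ContDiffOn.div_const
    apply ContDiffOn.mul
    · apply contDiffOn_prod
      intro j _
      exact ((contDiffOn_const.sub (contDiffOn_id.mul contDiffOn_const)).mul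
        (contDiffOn_const.sub (hinv.mul contDiffOn_const)))
    · exact contDiffOn_const.sub (hinv.mul contDiffOn_const)
  have hdg : ContDiffOn ℝ 1 (deriv g) ({0}ᶜ : Set ℝ) := by
    have := hgsm.deriv_of_isOpen hS (m := 1) (by norm_num)
    exact this
  have hgdiff : ∀ x ∈ ({0}ᶜ : Set ℝ), DifferentiableAt ℝ g x := fun x hx =>
    ((hgsm.differentiableOn (by norm_num)) x hx).differentiableAt (hS.mem_nhds hx)
  have hdgdiff : DifferentiableAt ℝ (deriv g) c :=
    ((hdg.differentiableOn one_ne_zero) c hcS).differentiableAt (hS.mem_nhds hcS)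
  -- first derivative as an eventual equality
  have hE : deriv (fun x => (1 - x * q) * g x) =ᶠ[nhds c]
      fun x => -q * g x + (1 - x * q) * deriv g x := by
    filter_upwards [hS.mem_nhds hcS] with x hx
    have hu : HasDerivAt (fun x : ℝ => 1 - x * q) (-q) x := by
      simpa using ((hasDerivAt_id x).mul_const q).const_sub 1
    have := hu.fun_mul (hgdiff x hx).hasDerivAt
    rw [this.deriv]
  rw [hE.deriv_eq]
  -- second derivative
  have hu : HasDerivAt (fun x : ℝ => 1 - x * q) (-q) c := by
    simpa using ((hasDerivAt_id c).mul_const q).const_sub 1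
  have hfin : HasDerivAt (fun x => -q * g x + (1 - x * q) * deriv g x)
      (-q * D + (-q * deriv g c + (1 - c * q) * deriv (deriv g) c)) c :=
    (hgD.const_mul (-q)).add (hu.mul hdgdiff.hasDerivAt)
  rw [hfin.deriv, hgD.deriv]
  have h0 : (1 - c * q) = 0 := by rw [hc]; field_simp; ring
  rw [h0, hD]
  have hm : m + 1 - 1 = m := rfl
  rw [hm]
  ring
end
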